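/- arXiv:2003.00841 — 2 statements merged into one kernel-verified Lean document; each statement's English description precedes it below -/
import Mathlib

section
/- Let c be a nonzero real number, p ∈ ℂ^n, and let φ₁,…,φ_N be holomorphic functions on a neighborhood of p with φ_i(p) = 0 for all i, and 0 ≤ s ≤ N. Suppose f(z) := 1 + (c/|c|)·(Σ_{i=1}^s |φ_i(z)|² − Σ_{i=s+1}^N |φ_i(z)|²) is positive on a neighborhood of p, and set D = (2/c) log f. Then f^{n+1} · det[∂²D/∂z_a ∂z̄_b]_{a,b=1,…,n} belongs to the Umehara algebra Λ_p: there exist a holomorphic function h' near p and a tuple α' of holomorphic functions vanishing at p with f^{n+1} · det[∂²D/∂z_a ∂z̄_b] = h' + conj(h') + ⟨α',α'⟩_{ℓ'} near p. -/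
open Filter Topology Complex

/-- Wirtinger derivative `∂F/∂z_j = ½(∂F/∂x_j − i ∂F/∂y_j)`. -/
noncomputable def wderiv {n : ℕ} (j : Fin n) (F : (Fin n → ℂ) → ℂ) (z : Fin n → ℂ) : ℂ :=
  (1 / 2 : ℂ) * (fderiv ℝ F z (Pi.single j 1) - Complex.I * fderiv ℝ F z (Pi.single j Complex.I))

/-- Conjugate Wirtinger derivative `∂F/∂z̄_j = ½(∂F/∂x_j + i ∂F/∂y_j)`. -/
noncomputable def wderivBar {n : ℕ} (j : Fin n) (F : (Fin n → ℂ) → ℂ) (z : Fin n → ℂ) : ℂ :=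
  (1 / 2 : ℂ) * (fderiv ℝ F z (Pi.single j 1) + Complex.I * fderiv ℝ F z (Pi.single j Complex.I))

/-- `⟨α,α⟩_ℓ(z)` as a complex number. -/
noncomputable def hermC {n m : ℕ} (ℓ : ℕ) (α : Fin m → (Fin n → ℂ) → ℂ)
    (z : Fin n → ℂ) : ℂ :=
  ∑ j : Fin m, (if (j : ℕ) < ℓ then (1 : ℂ) else -1) *
    (α j z * (starRingEnd ℂ) (α j z))

namespace UA

variable {n : ℕ}

theorem wderiv_congr {F G : (Fin n → ℂ) → ℂ} {z : Fin n → ℂ} (h : F =ᶠ[𝓝 z] G) (j : Fin n) :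
    wderiv j F z = wderiv j G z := by rw [wderiv, wderiv, h.fderiv_eq]

theorem wderiv_holo {F : (Fin n → ℂ) → ℂ} {z : Fin n → ℂ} (h : DifferentiableAt ℂ F z) (j : Fin n) :
    wderiv j F z = fderiv ℂ F z (Pi.single j 1) ∧ wderivBar j F z = 0 := by
  have hre := h.fderiv_restrictScalars ℝ
  have h1 : fderiv ℝ F z (Pi.single j 1) = fderiv ℂ F z (Pi.single j 1) := by rw [hre]; rfl
  have h2 : fderiv ℝ F z (Pi.single j Complex.I) = Complex.I * fderiv ℂ F z (Pi.single j 1) := by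
    have hsingle : (Pi.single j Complex.I : Fin n → ℂ)
        = (Complex.I • (Pi.single j (1:ℂ) : Fin n → ℂ) : Fin n → ℂ) := by
      ext k; by_cases hk : k = j
      · subst hk; simp
      · simp [Pi.single_apply, hk]
    rw [hre, hsingle]
    simp [map_smul, smul_eq_mul]
  constructor
  · rw [wderiv, h1, h2]; ring_nf; rw [Complex.I_sq]; ring
  · rw [wderivBar, h1, h2]; ring_nf; rw [Complex.I_sq]; ring

theorem wderiv_add {F G : (Fin n → ℂ) → ℂ} {z : Fin n → ℂ} (hF : DifferentiableAt ℝ F z)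
    (hG : DifferentiableAt ℝ G z) (j : Fin n) :
    wderiv j (fun w => F w + G w) z = wderiv j F z + wderiv j G z ∧
    wderivBar j (fun w => F w + G w) z = wderivBar j F z + wderivBar j G z := by
  have := fderiv_fun_add hF hG (𝕜 := ℝ)
  constructor <;> simp only [wderiv, wderivBar, this] <;> simp <;> ring

theorem wderiv_sum {ι : Type*} (s : Finset ι) {F : ι → (Fin n → ℂ) → ℂ} {z : Fin n → ℂ}
    (h : ∀ i ∈ s, DifferentiableAt ℝ (F i) z) (j : Fin n) :
    wderiv j (fun w => ∑ i ∈ s, F i w) z = ∑ i ∈ s, wderiv j (F i) z ∧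
    wderivBar j (fun w => ∑ i ∈ s, F i w) z = ∑ i ∈ s, wderivBar j (F i) z := by
  have := fderiv_fun_sum h (𝕜 := ℝ)
  constructor <;> simp only [wderiv, wderivBar, this, ContinuousLinearMap.sum_apply] <;>
    simp only [mul_sub, mul_add, Finset.mul_sum, Finset.sum_sub_distrib, Finset.sum_add_distrib]

theorem wderiv_const_mul {F : (Fin n → ℂ) → ℂ} {z : Fin n → ℂ} (c : ℂ)
    (hF : DifferentiableAt ℝ F z) (j : Fin n) :
    wderiv j (fun w => c * F w) z = c * wderiv j F z ∧
    wderivBar j (fun w => c * F w) z = c * wderivBar j F z := by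
  have := fderiv_const_mul hF c (𝕜 := ℝ)
  constructor <;> simp only [wderiv, wderivBar, this] <;> simp [smul_eq_mul] <;> ring

theorem wderiv_mul {F G : (Fin n → ℂ) → ℂ} {z : Fin n → ℂ} (hF : DifferentiableAt ℝ F z)
    (hG : DifferentiableAt ℝ G z) (j : Fin n) :
    wderiv j (fun w => F w * G w) z = wderiv j F z * G z + F z * wderiv j G z ∧
    wderivBar j (fun w => F w * G w) z = wderivBar j F z * G z + F z * wderivBar j G z := by
  have := fderiv_fun_mul hF hG (𝕜 := ℝ)
  constructor <;> simp only [wderiv, wderivBar, this] <;> simp [smul_eq_mul] <;> ring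

theorem wderiv_cconst (j : Fin n) (z : Fin n → ℂ) (c : ℂ) :
    wderiv j (fun _ => c) z = 0 ∧ wderivBar j (fun _ => c) z = 0 := by
  constructor <;> simp only [wderiv, wderivBar] <;> simp

/-- chain rule with a `ℂ → ℂ` differentiable outer function -/
theorem wderiv_comp {F : (Fin n → ℂ) → ℂ} {z : Fin n → ℂ} {g : ℂ → ℂ} {c : ℂ}
    (hg : HasDerivAt g c (F z)) (hF : DifferentiableAt ℝ F z) (j : Fin n) :
    wderiv j (fun w => g (F w)) z = c * wderiv j F z ∧
    wderivBar j (fun w => g (F w)) z = c * wderivBar j F z := by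
  have hc : HasFDerivAt (fun w => g (F w))
      ((((1 : ℂ →L[ℂ] ℂ).smulRight c).restrictScalars ℝ).comp (fderiv ℝ F z)) z :=
    (hg.hasFDerivAt.restrictScalars ℝ).comp z hF.hasFDerivAt
  constructor <;> simp only [wderiv, wderivBar, hc.fderiv] <;> simp [smul_eq_mul] <;> ring

theorem wderiv_inv {F : (Fin n → ℂ) → ℂ} {z : Fin n → ℂ} (hF : DifferentiableAt ℝ F z)
    (h0 : F z ≠ 0) (j : Fin n) :
    wderiv j (fun w => (F w)⁻¹) z = -((F z)^2)⁻¹ * wderiv j F z ∧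
    wderivBar j (fun w => (F w)⁻¹) z = -((F z)^2)⁻¹ * wderivBar j F z :=
  wderiv_comp (hasDerivAt_inv h0) hF j

theorem wderiv_conj {F : (Fin n → ℂ) → ℂ} {z : Fin n → ℂ} (hF : DifferentiableAt ℝ F z)
    (j : Fin n) :
    wderiv j (fun w => (starRingEnd ℂ) (F w)) z = (starRingEnd ℂ) (wderivBar j F z) ∧
    wderivBar j (fun w => (starRingEnd ℂ) (F w)) z = (starRingEnd ℂ) (wderiv j F z) := by
  have hc : HasFDerivAt (fun w => (starRingEnd ℂ) (F w))
      ((Complex.conjCLE : ℂ →L[ℝ] ℂ).comp (fderiv ℝ F z)) z :=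
    (Complex.conjCLE.toContinuousLinearMap.hasFDerivAt).comp z hF.hasFDerivAt
  have hap : ∀ v, ((Complex.conjCLE : ℂ →L[ℝ] ℂ).comp (fderiv ℝ F z)) v
      = (starRingEnd ℂ) (fderiv ℝ F z v) := fun v => rfl
  constructor <;> simp only [wderiv, wderivBar, hc.fderiv] <;>
    simp [hap, map_mul, map_sub, map_add, Complex.conj_I, map_div₀, map_one, map_ofNat] <;> ring

/-- chain rule for a real function of a real function, coerced to `ℂ`. -/
theorem wderiv_real_comp {f : (Fin n → ℂ) → ℝ} {z : Fin n → ℂ} {g : ℝ → ℝ} {c : ℝ}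
    (hg : HasDerivAt g c (f z)) (hf : DifferentiableAt ℝ f z) (j : Fin n) :
    wderiv j (fun w => ((g (f w) : ℝ) : ℂ)) z
      = (c : ℂ) * wderiv j (fun w => ((f w : ℝ) : ℂ)) z ∧
    wderivBar j (fun w => ((g (f w) : ℝ) : ℂ)) z
      = (c : ℂ) * wderivBar j (fun w => ((f w : ℝ) : ℂ)) z := by
  have hgf : HasFDerivAt (fun w => g (f w)) (c • fderiv ℝ f z) z :=
    hg.comp_hasFDerivAt z hf.hasFDerivAt
  have h1 : HasFDerivAt (fun w => ((g (f w) : ℝ) : ℂ))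
      (Complex.ofRealCLM.comp (c • fderiv ℝ f z)) z := Complex.ofRealCLM.hasFDerivAt.comp z hgf
  have h2 : HasFDerivAt (fun w => ((f w : ℝ) : ℂ))
      (Complex.ofRealCLM.comp (fderiv ℝ f z)) z :=
    Complex.ofRealCLM.hasFDerivAt.comp z hf.hasFDerivAt
  constructor <;> simp only [wderiv, wderivBar, h1.fderiv, h2.fderiv] <;>
    simp [smul_eq_mul] <;> push_cast <;> ring

end UA

namespace UA
variable {n : ℕ}

noncomputable def pickα {n M : ℕ} (sg : Fin M → ℝ) (β : Fin M → (Fin n → ℂ) → ℂ) :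
    Fin (M + M) → (Fin n → ℂ) → ℂ := fun j =>
  if h : (j : ℕ) < M then (if sg ⟨j, h⟩ = 1 then β ⟨j, h⟩ else 0)
  else (if sg ⟨(j : ℕ) - M, by have := j.isLt; omega⟩ = -1
        then β ⟨(j : ℕ) - M, by have := j.isLt; omega⟩ else 0)

theorem pickα_castAdd {M : ℕ} (sg : Fin M → ℝ) (β : Fin M → (Fin n → ℂ) → ℂ) (i : Fin M) :
    pickα sg β (Fin.castAdd M i) = (if sg i = 1 then β i else 0) := by
  have h : ((Fin.castAdd M i : Fin (M + M)) : ℕ) < M := i.isLt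
  rw [pickα, dif_pos h]
  simp

theorem pickα_natAdd {M : ℕ} (sg : Fin M → ℝ) (β : Fin M → (Fin n → ℂ) → ℂ) (i : Fin M) :
    pickα sg β (Fin.natAdd M i) = (if sg i = -1 then β i else 0) := by
  have h : ¬ ((Fin.natAdd M i : Fin (M + M)) : ℕ) < M := by simp
  rw [pickα, dif_neg h]
  simp [show M + (i : ℕ) - M = (i : ℕ) from by omega]

theorem hermC_realize (p : Fin n → ℂ) (K : Type) [Fintype K] (sg : K → ℝ)
    (hsg : ∀ k, sg k = 1 ∨ sg k = -1) (β : K → (Fin n → ℂ) → ℂ)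
    (hβ : ∀ k, AnalyticAt ℂ (β k) p) (hβ0 : ∀ k, β k p = 0) :
    ∃ (m' ℓ' : ℕ) (α' : Fin m' → (Fin n → ℂ) → ℂ),
      ℓ' ≤ m' ∧ (∀ j, AnalyticAt ℂ (α' j) p) ∧ (∀ j, α' j p = 0) ∧
      ∀ z, hermC ℓ' α' z = ∑ k, (sg k : ℂ) * (β k z * (starRingEnd ℂ) (β k z)) := by
  classical
  set M := Fintype.card K with hM
  set e := (Fintype.equivFin K).symm with he
  refine ⟨M + M, M, pickα (fun i => sg (e i)) (fun i => β (e i)), Nat.le_add_right M M, ?_, ?_, ?_⟩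
  · intro j
    rw [pickα]
    split_ifs <;> first | exact hβ _ | exact analyticAt_const
  · intro j
    rw [pickα]
    split_ifs <;> simp [hβ0]
  · intro z
    rw [hermC, Fin.sum_univ_add]
    have h1 : ∀ i : Fin M,
        (if ((Fin.castAdd M i : Fin (M + M)) : ℕ) < M then (1:ℂ) else -1) = 1 := by
      intro i; simp [i.isLt]
    have h2 : ∀ i : Fin M,
        (if ((Fin.natAdd M i : Fin (M + M)) : ℕ) < M then (1:ℂ) else -1) = -1 := by
      intro i; simp
    simp only [h1, h2, pickα_castAdd, pickα_natAdd, one_mul]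
    rw [← Finset.sum_add_distrib, ← Equiv.sum_comp e
      (fun k => (sg k : ℂ) * (β k z * (starRingEnd ℂ) (β k z)))]
    apply Finset.sum_congr rfl
    intro i _
    rcases hsg (e i) with h | h <;> rw [h] <;>
      simp [apply_ite (fun g : (Fin n → ℂ) → ℂ => g z)] <;> norm_num <;> ring
end UA

namespace UA2
open UA
variable {n : ℕ}

theorem main_assembly (p : Fin n → ℂ) (K : Type) [Fintype K] (R : K → ℝ)
    (P Q : K → (Fin n → ℂ) → ℂ) (hP : ∀ k, AnalyticAt ℂ (P k) p)
    (hQ : ∀ k, AnalyticAt ℂ (Q k) p) :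
    ∃ (m' ℓ' : ℕ) (h' : (Fin n → ℂ) → ℂ) (α' : Fin m' → (Fin n → ℂ) → ℂ),
      ℓ' ≤ m' ∧ AnalyticAt ℂ h' p ∧ (∀ j, AnalyticAt ℂ (α' j) p) ∧ (∀ j, α' j p = 0) ∧
      ∀ z, ∑ k, (R k : ℂ) * (P k z * (starRingEnd ℂ) (Q k z)
              + (starRingEnd ℂ) (P k z) * Q k z)
        = h' z + (starRingEnd ℂ) (h' z) + hermC ℓ' α' z := by
  classical
  -- shifted functions vanishing at p
  set P0 : K → (Fin n → ℂ) → ℂ := fun k z => P k z - P k p with hP0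
  set Q0 : K → (Fin n → ℂ) → ℂ := fun k z => Q k z - Q k p with hQ0
  -- the holomorphic part
  set h0 : (Fin n → ℂ) → ℂ := fun z => ∑ k, (R k : ℂ) *
    ((starRingEnd ℂ) (Q k p) * P0 k z + (starRingEnd ℂ) (P k p) * Q0 k z
      + P k p * (starRingEnd ℂ) (Q k p)) with hh0
  -- the signed squares
  set sg : K × Fin 3 → ℝ := fun t => if 0 ≤ R t.1 then (if t.2 = 0 then 1 else -1)
    else (if t.2 = 0 then -1 else 1) with hsg
  set β : K × Fin 3 → (Fin n → ℂ) → ℂ := fun t z =>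
    (Real.sqrt |R t.1| : ℂ) * (if t.2 = 0 then P0 t.1 z + Q0 t.1 z
      else if t.2 = 1 then P0 t.1 z else Q0 t.1 z) with hβ
  obtain ⟨m', ℓ', α', hle, hana, hvan, hherm⟩ := hermC_realize p (K × Fin 3) sg
    (by intro t; rw [hsg]; dsimp only; split_ifs <;> simp) β
    (by
      intro t; rw [hβ]; dsimp only
      apply AnalyticAt.mul analyticAt_const
      split_ifs
      · exact ((hP t.1).sub analyticAt_const).add ((hQ t.1).sub analyticAt_const)
      · exact (hP t.1).sub analyticAt_const
      · exact (hQ t.1).sub analyticAt_const)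
    (by intro t; rw [hβ]; dsimp only; split_ifs <;> simp [hP0, hQ0])
  refine ⟨m', ℓ', h0, α', hle, ?_, hana, hvan, ?_⟩
  · rw [hh0]
    apply Finset.analyticAt_fun_sum
    intro k _
    apply AnalyticAt.mul analyticAt_const
    exact (((analyticAt_const.mul ((hP k).sub analyticAt_const)).add
      (analyticAt_const.mul ((hQ k).sub analyticAt_const))).add analyticAt_const)
  · intro z
    rw [hherm z, hh0]
    dsimp only
    rw [Fintype.sum_prod_type]
    rw [map_sum, ← Finset.sum_add_distrib, ← Finset.sum_add_distrib]
    apply Finset.sum_congr rfl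
    intro k _
    rw [Fin.sum_univ_three]
    have habs : ((Real.sqrt |R k| : ℂ)) * ((Real.sqrt |R k| : ℂ)) = ((|R k| : ℝ) : ℂ) := by
      rw [← Complex.ofReal_mul, Real.mul_self_sqrt (abs_nonneg _)]
    have hsgabs : ∀ t : Fin 3, (sg (k, t) : ℂ) * ((|R k| : ℝ) : ℂ)
        = (if t = 0 then (R k : ℂ) else -(R k : ℂ)) := by
      intro t
      rw [hsg]; dsimp only
      rcases le_or_gt 0 (R k) with h | h
      · rw [if_pos h, _root_.abs_of_nonneg h]; split_ifs <;> simp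
      · rw [if_neg (not_le.mpr h), _root_.abs_of_neg h]; split_ifs <;> push_cast <;> ring
    clear hsgabs
    rcases le_or_gt 0 (R k) with hr | hr
    · have hs0 : sg (k, 0) = 1 := by simp [hsg, hr]
      have hs1 : sg (k, 1) = -1 := by simp [hsg, hr]
      have hs2 : sg (k, 2) = -1 := by simp [hsg, hr]
      have habs' : ((Real.sqrt |R k| : ℝ) : ℂ) * ((Real.sqrt |R k| : ℝ) : ℂ) = (R k : ℂ) := by
        rw [habs, _root_.abs_of_nonneg hr]
      simp only [hβ, hs0, hs1, hs2, hP0, hQ0]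
      push_cast
      simp only [map_mul, map_add, map_sub, Complex.conj_ofReal]
      norm_num
      linear_combination (-((P k z - P k p + (Q k z - Q k p)) *
          ((starRingEnd ℂ) (P k z) - (starRingEnd ℂ) (P k p)
            + ((starRingEnd ℂ) (Q k z) - (starRingEnd ℂ) (Q k p)))
        - (P k z - P k p) * ((starRingEnd ℂ) (P k z) - (starRingEnd ℂ) (P k p))
        - (Q k z - Q k p) * ((starRingEnd ℂ) (Q k z) - (starRingEnd ℂ) (Q k p)))) * habs'
    · have hs0 : sg (k, 0) = -1 := by simp [hsg, not_le.mpr hr]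
      have hs1 : sg (k, 1) = 1 := by simp [hsg, not_le.mpr hr]
      have hs2 : sg (k, 2) = 1 := by simp [hsg, not_le.mpr hr]
      have habs' : ((Real.sqrt |R k| : ℝ) : ℂ) * ((Real.sqrt |R k| : ℝ) : ℂ) = -(R k : ℂ) := by
        rw [habs, _root_.abs_of_neg hr]; push_cast; ring
      simp only [hβ, hs0, hs1, hs2, hP0, hQ0]
      push_cast
      simp only [map_mul, map_add, map_sub, Complex.conj_ofReal]
      norm_num
      linear_combination (((P k z - P k p + (Q k z - Q k p)) *
          ((starRingEnd ℂ) (P k z) - (starRingEnd ℂ) (P k p)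
            + ((starRingEnd ℂ) (Q k z) - (starRingEnd ℂ) (Q k p)))
        - (P k z - P k p) * ((starRingEnd ℂ) (P k z) - (starRingEnd ℂ) (P k p))
        - (Q k z - Q k p) * ((starRingEnd ℂ) (Q k z) - (starRingEnd ℂ) (Q k p)))) * habs'
end UA2

namespace UA3

/-- bordered determinant identity -/
theorem det_border (n : ℕ) (fz : ℂ) (A : Matrix (Fin n) (Fin n) ℂ) (u v : Fin n → ℂ) :
    fz ^ n * (Matrix.fromBlocks (Matrix.of fun _ _ : Unit => fz)
        (Matrix.of fun (_ : Unit) b => v b) (Matrix.of fun a (_ : Unit) => u a) A).det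
      = fz * (Matrix.of fun a b => fz * A a b - u a * v b).det := by
  classical
  set L : Matrix (Unit ⊕ Fin n) (Unit ⊕ Fin n) ℂ :=
    Matrix.fromBlocks 1 0 (Matrix.of fun a (_ : Unit) => -u a)
      (fz • (1 : Matrix (Fin n) (Fin n) ℂ)) with hL
  have hdetL : L.det = fz ^ n := by
    rw [hL, Matrix.det_fromBlocks_zero₁₂]
    simp [Matrix.det_smul]
  have hprod : L * (Matrix.fromBlocks (Matrix.of fun _ _ : Unit => fz)
      (Matrix.of fun (_ : Unit) b => v b) (Matrix.of fun a (_ : Unit) => u a) A)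
      = Matrix.fromBlocks (Matrix.of fun _ _ : Unit => fz) (Matrix.of fun (_ : Unit) b => v b) 0
        (Matrix.of fun a b => fz * A a b - u a * v b) := by
    rw [hL]
    ext a b
    cases a <;> cases b <;>
      simp [Matrix.mul_apply, Fintype.sum_sum_type, Matrix.one_apply, Matrix.fromBlocks] <;> ring
  have := congrArg Matrix.det hprod
  rw [Matrix.det_mul, hdetL, Matrix.det_fromBlocks_zero₂₁] at this
  rw [this]
  congr 1
  simp [Matrix.det_unique]

/-- multilinear expansion of a determinant whose rows are sums of scaled vectors -/
theorem det_expand {J ι : Type} [Fintype J] [DecidableEq J] [Fintype ι]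
    (c : ι → J → ℂ) (r : ι → J → ℂ) :
    (Matrix.of fun a b => ∑ i : ι, c i a * r i b).det
      = ∑ σ : J → ι, (∏ a, c (σ a) a) * (Matrix.of fun a b => r (σ a) b).det := by
  classical
  have h1 : (Matrix.of fun a b => ∑ i : ι, c i a * r i b)
      = fun a => ∑ i : ι, c i a • r i := by
    funext a b
    simp [Finset.sum_apply]
  show Matrix.detRowAlternating _ = _
  rw [h1]
  have h2 : Matrix.detRowAlternating (fun a => ∑ i : ι, c i a • r i)
      = ∑ σ : J → ι, Matrix.detRowAlternating (fun a => c (σ a) a • r (σ a)) :=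
    (Matrix.detRowAlternating : AlternatingMap ℂ (J → ℂ) ℂ J).toMultilinearMap.map_sum
      (fun (a : J) (i : ι) => c i a • r i)
  rw [h2]
  apply Finset.sum_congr rfl
  intro σ _
  have h3 : Matrix.detRowAlternating (fun a => c (σ a) a • r (σ a))
      = (∏ a, c (σ a) a) • Matrix.detRowAlternating (fun a => r (σ a)) :=
    (Matrix.detRowAlternating : AlternatingMap ℂ (J → ℂ) ℂ J).toMultilinearMap.map_smul_univ
      (fun a => c (σ a) a) (fun a => r (σ a))
  rw [h3, smul_eq_mul]
  rfl

end UA3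



namespace UA4
open UA

variable {n N : ℕ}

/-- complex partial of a function -/
noncomputable def psi {n : ℕ} (φ : (Fin n → ℂ) → ℂ) (a : Fin n) : (Fin n → ℂ) → ℂ :=
  fun z => fderiv ℂ φ z (Pi.single a 1)

/-- signed hermitian pairing of two families -/
noncomputable def pair {n N : ℕ} (ε : Fin N → ℝ) (G H : Fin N → (Fin n → ℂ) → ℂ) :
    (Fin n → ℂ) → ℂ :=
  fun z => ∑ i, (ε i : ℂ) * (G i z * (starRingEnd ℂ) (H i z))

theorem pair_def (ε : Fin N → ℝ) (G H : Fin N → (Fin n → ℂ) → ℂ) :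
    pair ε G H = fun z => ∑ i, (ε i : ℂ) * (G i z * (starRingEnd ℂ) (H i z)) := rfl

theorem diff_conj {F : (Fin n → ℂ) → ℂ} {z : Fin n → ℂ} (h : DifferentiableAt ℝ F z) :
    DifferentiableAt ℝ (fun w => (starRingEnd ℂ) (F w)) z :=
  Complex.conjCLE.toContinuousLinearMap.differentiableAt.comp z h

theorem psi_analytic {φ : (Fin n → ℂ) → ℂ} {z : Fin n → ℂ} (h : AnalyticAt ℂ φ z) (b : Fin n) :
    AnalyticAt ℂ (psi φ b) z := by
  have h2 := ((ContinuousLinearMap.apply ℂ ℂ (Pi.single b 1)).analyticAt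
    (fderiv ℂ φ z)).comp h.fderiv
  exact h2

theorem diff_normSq {F : (Fin n → ℂ) → ℂ} {z : Fin n → ℂ} (h : DifferentiableAt ℝ F z) :
    DifferentiableAt ℝ (fun w => Complex.normSq (F w)) z := by
  have heq : (fun w => Complex.normSq (F w))
      = fun w => Complex.reCLM (F w) * Complex.reCLM (F w)
        + Complex.imCLM (F w) * Complex.imCLM (F w) := by
    funext w; simp [Complex.normSq_apply]
  rw [heq]
  exact ((Complex.reCLM.differentiableAt.comp z h).mul
    (Complex.reCLM.differentiableAt.comp z h)).add
    ((Complex.imCLM.differentiableAt.comp z h).mul (Complex.imCLM.differentiableAt.comp z h))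

theorem pair_diff (ε : Fin N → ℝ) {G H : Fin N → (Fin n → ℂ) → ℂ} {z : Fin n → ℂ}
    (hG : ∀ i, AnalyticAt ℂ (G i) z) (hH : ∀ i, AnalyticAt ℂ (H i) z) :
    DifferentiableAt ℝ (pair ε G H) z := by
  apply DifferentiableAt.fun_sum
  intro i _
  exact ((((hG i).differentiableAt).restrictScalars ℝ).mul
    (diff_conj (((hH i).differentiableAt).restrictScalars ℝ))).const_mul _

theorem wd_pair (ε : Fin N → ℝ) {G H : Fin N → (Fin n → ℂ) → ℂ} {z : Fin n → ℂ}
    (hG : ∀ i, AnalyticAt ℂ (G i) z) (hH : ∀ i, AnalyticAt ℂ (H i) z) (a : Fin n) :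
    wderiv a (pair ε G H) z = pair ε (fun i => psi (G i) a) H z ∧
    wderivBar a (pair ε G H) z = pair ε G (fun i => psi (H i) a) z := by
  have hGd : ∀ i, DifferentiableAt ℝ (G i) z :=
    fun i => ((hG i).differentiableAt).restrictScalars ℝ
  have hHd : ∀ i, DifferentiableAt ℝ (H i) z :=
    fun i => ((hH i).differentiableAt).restrictScalars ℝ
  have hmul : ∀ i, DifferentiableAt ℝ (fun w => G i w * (starRingEnd ℂ) (H i w)) z :=
    fun i => (hGd i).mul (diff_conj (hHd i))
  have hterm : ∀ i ∈ Finset.univ,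
      DifferentiableAt ℝ (fun w => (ε i : ℂ) * (G i w * (starRingEnd ℂ) (H i w))) z :=
    fun i _ => (hmul i).const_mul _
  constructor
  · rw [pair_def, (wderiv_sum Finset.univ hterm a).1]
    apply Finset.sum_congr rfl
    intro i _
    rw [(wderiv_const_mul _ (hmul i) a).1, (wderiv_mul (hGd i) (diff_conj (hHd i)) a).1,
      (wderiv_conj (hHd i) a).1, (wderiv_holo (hH i).differentiableAt a).2,
      (wderiv_holo (hG i).differentiableAt a).1]
    simp [psi]
  · rw [pair_def, (wderiv_sum Finset.univ hterm a).2]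
    apply Finset.sum_congr rfl
    intro i _
    rw [(wderiv_const_mul _ (hmul i) a).2, (wderiv_mul (hGd i) (diff_conj (hHd i)) a).2,
      (wderiv_conj (hHd i) a).2, (wderiv_holo (hH i).differentiableAt a).1,
      (wderiv_holo (hG i).differentiableAt a).2]
    simp [psi]

/-- the complexified `f` -/
theorem f_diff {ε : Fin N → ℝ} {φ : Fin N → (Fin n → ℂ) → ℂ} {f : (Fin n → ℂ) → ℝ}
    (hf : ∀ w, (f w : ℂ) = 1 + pair ε φ φ w) {z : Fin n → ℂ}
    (hz : ∀ i, AnalyticAt ℂ (φ i) z) : DifferentiableAt ℝ f z := by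
  have hg : DifferentiableAt ℝ (fun w => 1 + pair ε φ φ w) z :=
    (differentiableAt_const _).add (pair_diff ε hz hz)
  have heq : f = fun w => Complex.reCLM ((fun w => 1 + pair ε φ φ w) w) := by
    funext w
    rw [show Complex.reCLM ((fun w => 1 + pair ε φ φ w) w) = ((1 : ℂ) + pair ε φ φ w).re from rfl,
      ← hf w, Complex.ofReal_re]
  rw [heq]
  exact Complex.reCLM.differentiableAt.comp z hg

theorem derivBar_D {c : ℝ} {ε : Fin N → ℝ} {φ : Fin N → (Fin n → ℂ) → ℂ}
    {f : (Fin n → ℂ) → ℝ} {D : (Fin n → ℂ) → ℂ}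
    (hf : ∀ w, (f w : ℂ) = 1 + pair ε φ φ w)
    (hD : ∀ w, D w = (((2 / c) * Real.log (f w) : ℝ) : ℂ))
    {z : Fin n → ℂ} (hz : ∀ i, AnalyticAt ℂ (φ i) z) (hzf : 0 < f z) (b : Fin n) :
    wderivBar b D z
      = (((2 / c) * (f z)⁻¹ : ℝ) : ℂ) * pair ε φ (fun i => psi (φ i) b) z := by
  have hfd : DifferentiableAt ℝ f z := f_diff hf hz
  have hgl : HasDerivAt (fun t => 2 / c * Real.log t) (2 / c * (f z)⁻¹) (f z) :=
    (Real.hasDerivAt_log (ne_of_gt hzf)).const_mul (2 / c)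
  have hDf : D = fun w => (((fun t => 2 / c * Real.log t) (f w) : ℝ) : ℂ) := funext hD
  rw [hDf, (wderiv_real_comp hgl hfd b).2]
  congr 1
  have hfc : (fun w => ((f w : ℝ) : ℂ)) = fun w => 1 + pair ε φ φ w := funext hf
  rw [hfc]
  have hd1 : DifferentiableAt ℝ (fun _ : Fin n → ℂ => (1 : ℂ)) z := differentiableAt_const _
  have := wderiv_add hd1 (pair_diff ε hz hz) b
  rw [this.2, (wderiv_cconst b z 1).2, (wd_pair ε hz hz b).2, zero_add]

theorem deriv2_D {c : ℝ} {ε : Fin N → ℝ} {φ : Fin N → (Fin n → ℂ) → ℂ}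
    {f : (Fin n → ℂ) → ℝ} {D : (Fin n → ℂ) → ℂ}
    (hf : ∀ w, (f w : ℂ) = 1 + pair ε φ φ w)
    (hD : ∀ w, D w = (((2 / c) * Real.log (f w) : ℝ) : ℂ))
    {z : Fin n → ℂ} (hnb : ∀ᶠ w in nhds z, (∀ i, AnalyticAt ℂ (φ i) w) ∧ 0 < f w)
    (a b : Fin n) :
    wderiv a (wderivBar b D) z
      = (2 / c : ℂ) * ((((1 + pair ε φ φ z) ^ 2)⁻¹)
          * ((1 + pair ε φ φ z) * pair ε (fun i => psi (φ i) a) (fun i => psi (φ i) b) z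
            - pair ε (fun i => psi (φ i) a) φ z * pair ε φ (fun i => psi (φ i) b) z)) := by
  obtain ⟨hz, hzf⟩ := hnb.self_of_nhds
  have hψ : ∀ i (d : Fin n), AnalyticAt ℂ (psi (φ i) d) z := fun i d => psi_analytic (hz i) d
  have hgz : (1 + pair ε φ φ z) = ((f z : ℝ) : ℂ) := (hf z).symm
  have hgne : (1 + pair ε φ φ z) ≠ 0 := by
    rw [hgz]; exact_mod_cast (ne_of_gt hzf)
  -- the function G agreeing with wderivBar b D near z
  set G : (Fin n → ℂ) → ℂ :=
    fun w => (2 / c : ℂ) * ((1 + pair ε φ φ w)⁻¹ * pair ε φ (fun i => psi (φ i) b) w) with hG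
  have hGeq : (fun w => wderivBar b D w) =ᶠ[nhds z] G := by
    filter_upwards [hnb] with w hw
    rw [derivBar_D hf hD hw.1 hw.2 b, hG]
    have : ((f w)⁻¹ : ℂ) = (1 + pair ε φ φ w)⁻¹ := by rw [← hf w]
    push_cast
    rw [this]
    ring
  rw [wderiv_congr hGeq a, hG]
  -- differentiability ingredients at z
  have hgd : DifferentiableAt ℝ (fun w => 1 + pair ε φ φ w) z :=
    (differentiableAt_const _).add (pair_diff ε hz hz)
  have hinvd : DifferentiableAt ℝ (fun w => (1 + pair ε φ φ w)⁻¹) z := hgd.inv hgne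
  have hvd : DifferentiableAt ℝ (pair ε φ (fun i => psi (φ i) b)) z :=
    pair_diff ε hz (fun i => hψ i b)
  rw [(wderiv_const_mul (F := fun w => (1 + pair ε φ φ w)⁻¹ * pair ε φ (fun i => psi (φ i) b) w) _ (hinvd.mul hvd) a).1,
    (wderiv_mul hinvd hvd a).1,
    (wderiv_inv hgd hgne a).1,
    (wd_pair ε hz (fun i => hψ i b) a).1]
  have h1 : wderiv a (fun w => 1 + pair ε φ φ w) z = pair ε (fun i => psi (φ i) a) φ z := by
    have := wderiv_add (differentiableAt_const (1:ℂ)) (pair_diff ε hz hz) a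
    rw [this.1, (wderiv_cconst a z 1).1, (wd_pair ε hz hz a).1, zero_add]
  rw [h1]
  have hkey : ((1 + pair ε φ φ z)^2)⁻¹ * (1 + pair ε φ φ z) = (1 + pair ε φ φ z)⁻¹ := by
    rw [pow_two, mul_inv, mul_assoc, inv_mul_cancel₀ hgne, mul_one]
  linear_combination (2 / (c:ℂ))
    * (-(pair ε (fun i => psi (φ i) a) (fun i => psi (φ i) b) z)) * hkey

end UA4

/-- Proposition `mainprop`, case `c ≠ 0`: with `f = 1 + (c/|c|)(Σ_{i<s}|φ_i|² − Σ_{i≥s}|φ_i|²)`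
positive near `p` and `D = (2/c) log f`, the function
`f^{n+1} det[∂²D/∂z_a ∂z̄_b] = e^{(n+1)(c/2)D} det[∂²D/∂z_a ∂z̄_b]` belongs to `Λ_p`. -/
theorem stmt4 {n N : ℕ} (c : ℝ) (hc : c ≠ 0) (p : Fin n → ℂ) (s : ℕ) (hs : s ≤ N)
    (φ : Fin N → (Fin n → ℂ) → ℂ)
    (hφ : ∀ i, AnalyticAt ℂ (φ i) p) (hφ0 : ∀ i, φ i p = 0)
    (f : (Fin n → ℂ) → ℝ)
    (hf : ∀ z, f z = 1 + (c / |c|) *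
      ∑ i : Fin N, (if (i : ℕ) < s then (1 : ℝ) else -1) * Complex.normSq (φ i z))
    (hfpos : ∀ᶠ z in 𝓝 p, 0 < f z)
    (D : (Fin n → ℂ) → ℂ)
    (hD : ∀ z, D z = (((2 / c) * Real.log (f z) : ℝ) : ℂ)) :
    ∃ (m' : ℕ) (ℓ' : ℕ) (h' : (Fin n → ℂ) → ℂ) (α' : Fin m' → (Fin n → ℂ) → ℂ),
      ℓ' ≤ m' ∧ AnalyticAt ℂ h' p ∧ (∀ j, AnalyticAt ℂ (α' j) p) ∧ (∀ j, α' j p = 0) ∧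
      ∀ᶠ z in 𝓝 p,
        ((f z : ℂ)) ^ (n + 1) *
            Matrix.det (Matrix.of fun a b : Fin n => wderiv a (wderivBar b D) z) =
          h' z + (starRingEnd ℂ) (h' z) + hermC ℓ' α' z := by
  classical
  set ε : Fin N → ℝ := fun i => (c / |c|) * (if (i : ℕ) < s then 1 else -1) with hεdef
  -- complexified formula for f
  have hfC : ∀ w, ((f w : ℝ) : ℂ) = 1 + UA4.pair ε φ φ w := by
    intro w
    rw [hf w, UA4.pair_def]
    push_cast
    rw [Finset.mul_sum]
    congr 1
    apply Finset.sum_congr rfl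
    intro i _
    rw [← Complex.mul_conj, hεdef]
    push_cast
    split_ifs <;> ring
  -- eventual well-behavedness
  have hev : ∀ᶠ w in 𝓝 p, (∀ i, AnalyticAt ℂ (φ i) w) ∧ 0 < f w :=
    (Filter.eventually_all.2 fun i => (hφ i).eventually_analyticAt).and hfpos
  have hev2 : ∀ᶠ z in 𝓝 p, ∀ᶠ w in 𝓝 z, (∀ i, AnalyticAt ℂ (φ i) w) ∧ 0 < f w :=
    eventually_eventually_nhds.2 hev
  have hW : ∀ᶠ z in 𝓝 p, ∀ a b : Fin n, wderiv a (wderivBar b D) z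
      = (2 / c : ℂ) * ((((1 + UA4.pair ε φ φ z) ^ 2)⁻¹)
          * ((1 + UA4.pair ε φ φ z)
              * UA4.pair ε (fun i => UA4.psi (φ i) a) (fun i => UA4.psi (φ i) b) z
            - UA4.pair ε (fun i => UA4.psi (φ i) a) φ z
              * UA4.pair ε φ (fun i => UA4.psi (φ i) b) z)) := by
    filter_upwards [hev2] with z hz
    intro a b
    exact UA4.deriv2_D hfC hD hz a b
  -- the extended family of holomorphic functions
  set w : Option (Fin N) → (Unit ⊕ Fin n) → (Fin n → ℂ) → ℂ := fun o =>
    Option.elim o (Sum.elim (fun _ _ => (1 : ℂ)) (fun _ _ => (0 : ℂ)))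
      (fun i => Sum.elim (fun _ z => φ i z) (fun b z => UA4.psi (φ i) b z)) with hwdef
  set eC : Option (Fin N) → ℝ := fun o => Option.elim o 1 ε with heCdef
  set P : ((Unit ⊕ Fin n) → Option (Fin N)) → (Fin n → ℂ) → ℂ :=
    fun σ z => ∏ a, w (σ a) a z with hPdef
  set Q : ((Unit ⊕ Fin n) → Option (Fin N)) → (Fin n → ℂ) → ℂ :=
    fun σ z => (Matrix.of fun a b => w (σ a) b z).det with hQdef
  set R : ((Unit ⊕ Fin n) → Option (Fin N)) → ℝ :=
    fun σ => (2 / c) ^ n * (∏ a, eC (σ a)) / 2 with hRdef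
  have hw_an : ∀ o a, AnalyticAt ℂ (w o a) p := by
    rintro (_ | i) (u | a) <;> rw [hwdef]
    · exact analyticAt_const
    · exact analyticAt_const
    · exact hφ i
    · exact UA4.psi_analytic (hφ i) a
  have hP_an : ∀ σ, AnalyticAt ℂ (P σ) p := by
    intro σ
    rw [hPdef]
    exact Finset.analyticAt_fun_prod _ fun a _ => hw_an (σ a) a
  have hQ_an : ∀ σ, AnalyticAt ℂ (Q σ) p := by
    intro σ
    have hq : Q σ = fun z => ∑ τ : Equiv.Perm (Unit ⊕ Fin n),
        ((Equiv.Perm.sign τ : ℤ) : ℂ) * ∏ a, w (σ (τ a)) a z := by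
      funext z
      simp only [hQdef]
      rw [Matrix.det_apply']
      simp
    rw [hq]
    apply Finset.analyticAt_fun_sum
    intro τ _
    exact analyticAt_const.mul (Finset.analyticAt_fun_prod _ fun a _ => hw_an (σ (τ a)) a)
  obtain ⟨m', ℓ', h', α', hle, hh, hαa, hα0, hsum⟩ :=
    UA2.main_assembly p ((Unit ⊕ Fin n) → Option (Fin N)) R P Q hP_an hQ_an
  refine ⟨m', ℓ', h', α', hle, hh, hαa, hα0, ?_⟩
  filter_upwards [hW, hev] with z hz2 hz
  obtain ⟨hza, hzf⟩ := hz
  rw [← hsum z]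
  -- notation
  set gz : ℂ := 1 + UA4.pair ε φ φ z with hgzdef
  have hfz : ((f z : ℝ) : ℂ) = gz := hfC z
  have hgne : gz ≠ 0 := by
    rw [← hfz]
    exact_mod_cast ne_of_gt hzf
  set u' : Fin n → ℂ := fun a => UA4.pair ε (fun i => UA4.psi (φ i) a) φ z with hu'def
  set v' : Fin n → ℂ := fun b => UA4.pair ε φ (fun i => UA4.psi (φ i) b) z with hv'def
  set Amat : Matrix (Fin n) (Fin n) ℂ := Matrix.of fun a b =>
    UA4.pair ε (fun i => UA4.psi (φ i) a) (fun i => UA4.psi (φ i) b) z with hAdef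
  set Mz : Matrix (Fin n) (Fin n) ℂ :=
    Matrix.of fun a b => gz * Amat a b - u' a * v' b with hMdef
  set Bz : Matrix (Unit ⊕ Fin n) (Unit ⊕ Fin n) ℂ :=
    Matrix.fromBlocks (Matrix.of fun _ _ : Unit => gz) (Matrix.of fun (_ : Unit) b => v' b)
      (Matrix.of fun a (_ : Unit) => u' a) Amat with hBdef
  -- the W matrix is a scalar multiple of Mz
  have hWM : (Matrix.of fun a b : Fin n => wderiv a (wderivBar b D) z)
      = ((2 / (c : ℂ)) * ((gz ^ 2)⁻¹)) • Mz := by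
    ext a b
    rw [Matrix.of_apply, hz2 a b]
    simp only [Matrix.smul_apply, hMdef, Matrix.of_apply, hAdef, hu'def, hv'def,
      hgzdef, smul_eq_mul]
    ring
  have hdetW : (Matrix.of fun a b : Fin n => wderiv a (wderivBar b D) z).det
      = ((2 / (c : ℂ)) * ((gz ^ 2)⁻¹)) ^ n * Mz.det := by
    rw [hWM, Matrix.det_smul]
    simp [smul_eq_mul]
  have hborder : gz ^ n * Bz.det = gz * Mz.det := UA3.det_border n gz Amat u' v'
  -- Bz as a hermitian sum matrix
  have hBsum : Bz = Matrix.of (fun a b => ∑ o : Option (Fin N),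
      ((eC o : ℂ) * w o a z) * (starRingEnd ℂ) (w o b z)) := by
    ext a b
    cases a <;> cases b <;>
      simp [hBdef, Fintype.sum_option, heCdef, hwdef, Matrix.fromBlocks, hgzdef,
        hAdef, hu'def, hv'def, UA4.pair_def, mul_assoc]
  have hexp : Bz.det = ∑ σ : (Unit ⊕ Fin n) → Option (Fin N),
      (∏ a, ((eC (σ a) : ℂ) * w (σ a) a z))
        * (Matrix.of fun a b => (starRingEnd ℂ) (w (σ a) b z)).det := by
    rw [hBsum]
    exact UA3.det_expand (fun o a => (eC o : ℂ) * w o a z)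
      (fun o b => (starRingEnd ℂ) (w o b z))
  have hdc : ∀ σ : (Unit ⊕ Fin n) → Option (Fin N),
      (Matrix.of fun a b => (starRingEnd ℂ) (w (σ a) b z)).det
        = (starRingEnd ℂ) (Q σ z) := by
    intro σ
    rw [hQdef]
    exact (RingHom.map_det (starRingEnd ℂ) (Matrix.of fun a b => w (σ a) b z)).symm
  have hS1 : Bz.det = ∑ σ : (Unit ⊕ Fin n) → Option (Fin N),
      ((∏ a, eC (σ a) : ℝ) : ℂ) * (P σ z * (starRingEnd ℂ) (Q σ z)) := by
    rw [hexp]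
    apply Finset.sum_congr rfl
    intro σ _
    rw [hdc σ, Finset.prod_mul_distrib, hPdef]
    push_cast
    ring
  -- hermitian symmetry
  have hS3 : (starRingEnd ℂ) Bz.det = Bz.det := by
    have h1 : Bz.conjTranspose = Bz := by
      rw [hBsum]
      ext a b
      simp only [Matrix.conjTranspose_apply, Matrix.of_apply, Complex.star_def, map_sum,
        map_mul, Complex.conj_conj, Complex.conj_ofReal]
      apply Finset.sum_congr rfl
      intro o _
      ring
    calc (starRingEnd ℂ) Bz.det = star Bz.det := rfl
    _ = Bz.conjTranspose.det := (Matrix.det_conjTranspose Bz).symm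
    _ = Bz.det := by rw [h1]
  have hS2 : (starRingEnd ℂ) Bz.det = ∑ σ : (Unit ⊕ Fin n) → Option (Fin N),
      ((∏ a, eC (σ a) : ℝ) : ℂ) * ((starRingEnd ℂ) (P σ z) * Q σ z) := by
    rw [hS1, map_sum]
    apply Finset.sum_congr rfl
    intro σ _
    simp only [map_mul, Complex.conj_conj, Complex.conj_ofReal]
  -- the sum equals (2/c)^n * det Bz
  have hS4 : ∑ σ : (Unit ⊕ Fin n) → Option (Fin N),
      ((R σ : ℝ) : ℂ) * (P σ z * (starRingEnd ℂ) (Q σ z)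
        + (starRingEnd ℂ) (P σ z) * Q σ z)
      = (2 / (c : ℂ)) ^ n * Bz.det := by
    have expand : ∑ σ : (Unit ⊕ Fin n) → Option (Fin N),
        ((R σ : ℝ) : ℂ) * (P σ z * (starRingEnd ℂ) (Q σ z)
          + (starRingEnd ℂ) (P σ z) * Q σ z)
        = (2 / (c : ℂ)) ^ n / 2 *
          ((∑ σ : (Unit ⊕ Fin n) → Option (Fin N),
            ((∏ a, eC (σ a) : ℝ) : ℂ) * (P σ z * (starRingEnd ℂ) (Q σ z)))
          + ∑ σ : (Unit ⊕ Fin n) → Option (Fin N),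
            ((∏ a, eC (σ a) : ℝ) : ℂ) * ((starRingEnd ℂ) (P σ z) * Q σ z)) := by
      rw [← Finset.sum_add_distrib, Finset.mul_sum]
      apply Finset.sum_congr rfl
      intro σ _
      rw [hRdef]
      push_cast
      ring
    rw [expand, ← hS1, ← hS2, hS3]
    ring
  rw [hS4, hfz, hdetW]
  -- final power juggling
  apply mul_left_cancel₀ (pow_ne_zero n hgne)
  have hsqne : gz ^ 2 ≠ 0 := pow_ne_zero 2 hgne
  have hk : ((2 / (c : ℂ)) * ((gz ^ 2)⁻¹)) ^ n * gz ^ (2 * n) = (2 / (c : ℂ)) ^ n := by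
    rw [mul_pow, pow_mul, mul_assoc, ← mul_pow, inv_mul_cancel₀ hsqne, one_pow, mul_one]
  calc gz ^ n * (gz ^ (n + 1) * (((2 / (c:ℂ)) * ((gz ^ 2)⁻¹)) ^ n * Mz.det))
      = (gz * Mz.det) * (((2 / (c:ℂ)) * ((gz ^ 2)⁻¹)) ^ n * gz ^ (2 * n)) := by ring
    _ = (gz * Mz.det) * (2 / (c:ℂ)) ^ n := by rw [hk]
    _ = (2 / (c:ℂ)) ^ n * (gz ^ n * Bz.det) := by rw [← hborder]; ring
    _ = gz ^ n * ((2 / (c:ℂ)) ^ n * Bz.det) := by ring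
end

section
/- Let U ⊆ ℂ^n be a connected open set and let φ₁,…,φ_l be holomorphic functions on U that are algebraically independent over the field of rational functions: there is no nonzero polynomial P ∈ ℂ[z₁,…,z_n, X₁,…,X_l] with P(z, φ₁(z),…,φ_l(z)) = 0 for all z ∈ U. Let Û be a connected open neighborhood of the graph {(z, φ₁(z),…,φ_l(z)) : z ∈ U} in ℂ^n × ℂ^l and let G be a holomorphic Nash algebraic function on Û. If G(z, φ₁(z),…,φ_l(z)) = 0 for all z ∈ U, then G vanishes identically on Û. -/
open Filter Topology Complex

/-- Identity theorem for holomorphic functions on a normed space over ℂ, proved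
via one-dimensional slices. -/
lemma identity_slice {E : Type*} [NormedAddCommGroup E] [NormedSpace ℂ E]
    {f : E → ℂ} {Us : Set E} (hf : DifferentiableOn ℂ f Us) (ho : IsOpen Us)
    (hc : IsPreconnected Us) {x₀ : E} (hx₀ : x₀ ∈ Us) (h0 : f =ᶠ[𝓝 x₀] 0) :
    Set.EqOn f 0 Us := by
  let u : Set E := {x | f =ᶠ[𝓝 x] 0}
  suffices main : closure u ∩ Us ⊆ u by
    have Uu : Us ⊆ u :=
      hc.subset_of_closure_inter_subset isOpen_setOf_eventually_nhds ⟨x₀, hx₀, h0⟩ main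
    intro z hz
    exact (Uu hz).self_of_nhds
  rintro x ⟨xu, xU⟩
  obtain ⟨r, hr, hball⟩ := Metric.isOpen_iff.1 ho x xU
  obtain ⟨y, hyu, hxy⟩ := Metric.mem_closure_iff.1 xu (r / 2) (by linarith)
  -- show f vanishes on ball y (r/2)
  have key : ∀ w ∈ Metric.ball y (r / 2), f w = 0 := by
    intro w hw
    set L : ℂ →ᵃ[ℂ] E := AffineMap.lineMap y w with hL
    have hLfun : (L : ℂ → E) = fun t => t • (w - y) + y := by
      rw [hL, AffineMap.coe_lineMap]; rfl
    have hLdiff : Differentiable ℂ (L : ℂ → E) := by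
      rw [hLfun]
      exact (differentiable_id.smul_const (w - y)).add_const y
    set s : Set ℂ := (L : ℂ → E) ⁻¹' Metric.ball x r with hs
    have hsconv : Convex ℝ s := by
      intro t₁ h₁ t₂ h₂ a b ha hb hab
      simp only [hs, Set.mem_preimage, hLfun] at h₁ h₂ ⊢
      have hmem := (convex_ball x r) h₁ h₂ ha hb hab
      have expand : a • (t₁ • (w - y) + y) + b • (t₂ • (w - y) + y)
          = (a • t₁ + b • t₂) • (w - y) + y := by
        have hy : a • y + b • y = y := by rw [← add_smul, hab, one_smul]
        have h1 : (a • t₁ + b • t₂) • (w - y)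
            = a • (t₁ • (w - y)) + b • (t₂ • (w - y)) := by
          rw [add_smul, smul_assoc, smul_assoc]
        rw [smul_add, smul_add, h1, add_add_add_comm, hy]
      rwa [expand] at hmem
    have hsopen : IsOpen s := (Metric.isOpen_ball).preimage hLdiff.continuous
    have hmaps : ∀ t ∈ s, (L : ℂ → E) t ∈ Us := fun t ht => hball ht
    have hgdiff : DifferentiableOn ℂ (f ∘ (L : ℂ → E)) s :=
      hf.comp hLdiff.differentiableOn hmaps
    have hgana : AnalyticOnNhd ℂ (f ∘ (L : ℂ → E)) s := hgdiff.analyticOnNhd hsopen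
    have h0s : (0 : ℂ) ∈ s := by
      simp only [hs, Set.mem_preimage, hLfun, Metric.mem_ball]
      simpa [dist_comm] using lt_of_lt_of_le hxy (by linarith)
    have h1s : (1 : ℂ) ∈ s := by
      simp only [hs, Set.mem_preimage, hLfun, Metric.mem_ball]
      have : dist (1 • (w - y) + y) x ≤ dist (1 • (w - y) + y) y + dist y x := dist_triangle _ _ _
      have hwy : dist ((1 : ℂ) • (w - y) + y) y = dist w y := by simp
      have hyx : dist y x < r / 2 := by rwa [dist_comm] at hxy
      have hwyb : dist w y < r / 2 := Metric.mem_ball.1 hw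
      calc dist ((1:ℂ) • (w - y) + y) x ≤ dist ((1:ℂ) • (w - y) + y) y + dist y x :=
            dist_triangle _ _ _
        _ < r / 2 + r / 2 := by rw [hwy]; exact add_lt_add hwyb hyx
        _ = r := by ring
    have hg0 : (f ∘ (L : ℂ → E)) =ᶠ[𝓝 (0 : ℂ)] 0 := by
      have hL0 : Tendsto (L : ℂ → E) (𝓝 0) (𝓝 y) := by
        have h00 : (L : ℂ → E) 0 = y := by rw [hLfun]; simp
        have := (hLdiff.continuous.tendsto (0 : ℂ))
        rwa [h00] at this
      exact hyu.comp_tendsto hL0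
    have := hgana.eqOn_zero_of_preconnected_of_eventuallyEq_zero hsconv.isPreconnected h0s hg0 h1s
    have hL1 : (L : ℂ → E) 1 = w := by rw [hLfun]; simp
    simpa [Function.comp, hL1] using this
  have : Metric.ball y (r / 2) ∈ 𝓝 x :=
    Metric.isOpen_ball.mem_nhds (by simpa [Metric.mem_ball, dist_comm] using hxy)
  filter_upwards [this] with z hz using key z hz

lemma continuous_mvEval {n l : ℕ} (c : MvPolynomial (Fin n ⊕ Fin l) ℂ) :
    Continuous fun x : (Fin n → ℂ) × (Fin l → ℂ) =>
      MvPolynomial.eval (Sum.elim x.1 x.2) c := by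
  induction c using MvPolynomial.induction_on with
  | C a => simpa using continuous_const
  | add p q hp hq => simp only [MvPolynomial.eval_add]; exact hp.add hq
  | mul_X p i hp =>
      simp only [MvPolynomial.eval_mul, MvPolynomial.eval_X]
      refine hp.mul ?_
      cases i with
      | inl j => exact (continuous_apply j).comp continuous_fst
      | inr j => exact (continuous_apply j).comp continuous_snd

/-- A holomorphic function `G` on `Us ⊆ ℂ^n × ℂ^l` is Nash algebraic if it satisfies a
nontrivial polynomial equation `P(z, X, G(z,X)) = 0` on `Us`. -/
def NashAlgebraicOn2 {n l : ℕ} (G : (Fin n → ℂ) × (Fin l → ℂ) → ℂ)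
    (Uhat : Set ((Fin n → ℂ) × (Fin l → ℂ))) : Prop :=
  DifferentiableOn ℂ G Uhat ∧
    ∃ P : Polynomial (MvPolynomial (Fin n ⊕ Fin l) ℂ), P ≠ 0 ∧
      ∀ zX ∈ Uhat,
        Polynomial.eval₂ (MvPolynomial.eval (Sum.elim zX.1 zX.2)) (G zX) P = 0

/-- A Nash algebraic function vanishing along the graph of holomorphic functions which
are algebraically independent over the rational functions vanishes identically. -/
theorem stmt11 {n l : ℕ} (U : Set (Fin n → ℂ)) (hUopen : IsOpen U) (hUconn : IsConnected U)
    (φ : Fin l → (Fin n → ℂ) → ℂ) (hφ : ∀ i, DifferentiableOn ℂ (φ i) U)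
    (hindep : ¬ ∃ P : MvPolynomial (Fin n ⊕ Fin l) ℂ, P ≠ 0 ∧
      ∀ z ∈ U, MvPolynomial.eval (Sum.elim z (fun i => φ i z)) P = 0)
    (Uhat : Set ((Fin n → ℂ) × (Fin l → ℂ)))
    (hUhatOpen : IsOpen Uhat) (hUhatConn : IsConnected Uhat)
    (hgraph : ∀ z ∈ U, (z, fun i => φ i z) ∈ Uhat)
    (G : (Fin n → ℂ) × (Fin l → ℂ) → ℂ) (hG : NashAlgebraicOn2 G Uhat)
    (hvanish : ∀ z ∈ U, G (z, fun i => φ i z) = 0) :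
    ∀ zX ∈ Uhat, G zX = 0 := by
  obtain ⟨hGdiff, P, hPne, hPeq⟩ := hG
  by_contra hcon
  push_neg at hcon
  obtain ⟨x₀, hx₀U, hGx₀⟩ := hcon
  -- factor out the trailing power of X
  set m := P.natTrailingDegree with hm
  obtain ⟨Q, hQ⟩ : Polynomial.X ^ m ∣ P :=
    Polynomial.X_pow_dvd_iff.2 fun d hd =>
      Polynomial.coeff_eq_zero_of_lt_natTrailingDegree hd
  have ha : Q.coeff 0 ≠ 0 := by
    have h1 : P.coeff m = Q.coeff 0 := by
      have := Polynomial.coeff_X_pow_mul Q m 0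
      rw [← hQ] at this
      simpa using this
    have h2 : P.coeff m ≠ 0 := Polynomial.trailingCoeff_nonzero_iff_nonzero.2 hPne
    rwa [h1] at h2
  -- the evaluation of Q
  set H : (Fin n → ℂ) × (Fin l → ℂ) → ℂ := fun x =>
    Polynomial.eval₂ (MvPolynomial.eval (Sum.elim x.1 x.2)) (G x) Q with hH
  have hHev : ∀ x ∈ Uhat, G x ^ m * H x = 0 := by
    intro x hx
    have := hPeq x hx
    rw [hQ, Polynomial.eval₂_mul, Polynomial.eval₂_X_pow] at this
    exact this
  -- H vanishes where G ≠ 0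
  set V : Set ((Fin n → ℂ) × (Fin l → ℂ)) := {x ∈ Uhat | G x ≠ 0} with hV
  have hHV : ∀ x ∈ V, H x = 0 := by
    rintro x ⟨hx, hGx⟩
    have := hHev x hx
    exact (mul_eq_zero.1 this).resolve_left (pow_ne_zero m hGx)
  -- V is dense in Uhat
  have hdense : ∀ x ∈ Uhat, x ∈ closure V := by
    intro x hx
    by_contra hnc
    obtain ⟨W, hWopen, hxW, hWV⟩ : ∃ W, IsOpen W ∧ x ∈ W ∧ W ∩ V = ∅ := by
      have : x ∈ (closure V)ᶜ := hnc
      exact ⟨(closure V)ᶜ, isOpen_compl_iff.2 isClosed_closure, this,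
        Set.eq_empty_of_subset_empty fun y ⟨hy1, hy2⟩ => hy1 (subset_closure hy2)⟩
    have hzero : G =ᶠ[𝓝 x] 0 := by
      have : W ∩ Uhat ∈ 𝓝 x := (hWopen.inter hUhatOpen).mem_nhds ⟨hxW, hx⟩
      filter_upwards [this] with y ⟨hyW, hyU⟩
      by_contra hGy
      exact (Set.eq_empty_iff_forall_notMem.1 hWV y) ⟨hyW, hyU, hGy⟩
    have := identity_slice hGdiff hUhatOpen hUhatConn.isPreconnected hx hzero hx₀U
    exact hGx₀ this
  -- H is continuous at points of Uhat
  have hHcont : ∀ x ∈ Uhat, ContinuousAt H x := by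
    intro x hx
    have hGc : ContinuousAt G x :=
      (hGdiff.differentiableAt (hUhatOpen.mem_nhds hx)).continuousAt
    have : H = fun x => ∑ i ∈ Finset.range (Q.natDegree + 1),
        MvPolynomial.eval (Sum.elim x.1 x.2) (Q.coeff i) * G x ^ i := by
      funext y
      rw [hH]
      exact Polynomial.eval₂_eq_sum_range _ _
    rw [this]
    exact tendsto_finset_sum _ fun i _ =>
      (((continuous_mvEval (Q.coeff i)).continuousAt).mul (hGc.pow i))
  -- conclude H = 0 on Uhat by density
  have hH0 : ∀ x ∈ Uhat, H x = 0 := by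
    intro x hx
    have hne : (𝓝[V] x).NeBot := mem_closure_iff_nhdsWithin_neBot.1 (hdense x hx)
    have h1 : Tendsto H (𝓝[V] x) (𝓝 (H x)) :=
      ((hHcont x hx).continuousWithinAt).tendsto
    have h2 : Tendsto H (𝓝[V] x) (𝓝 0) := by
      refine Tendsto.congr' ?_ tendsto_const_nhds
      filter_upwards [self_mem_nhdsWithin] with y hy using (hHV y hy).symm
    exact tendsto_nhds_unique h1 h2
  -- evaluate along the graph
  refine hindep ⟨Q.coeff 0, ha, fun z hz => ?_⟩
  have hx := hgraph z hz
  have := hH0 _ hx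
  rw [hH] at this
  simp only at this
  rw [hvanish z hz, Polynomial.eval₂_at_zero] at this
  exact this
end
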